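/- (AdaGrad-Norm regret bound) Let K ⊆ ℝ^d be a closed convex set with diameter D (i.e., ‖x − y‖ ≤ D for all x, y ∈ K). Let g₁, ..., g_T ∈ ℝ^d be arbitrary vectors and define iterates w_{t+1} = Π_K(w_t − η_t g_t) with η_t = (D/√2) / √(Σ_{k=1}^{t} ‖g_k‖²), starting from any w₁ ∈ K. Then for any w* ∈ K, Σ_{t=1}^{T} g_t^⊤(w_t − w*) ≤ D √(2 Σ_{t=1}^{T} ‖g_t‖²). -/

import Mathlib

open scoped RealInnerProductSpace


lemma proj_contract {E : Type*} [NormedAddCommGroup E] [InnerProductSpace ℝ E]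
    {K : Set E} (hKconv : Convex ℝ K) (proj : E → E)
    (hproj : ∀ x, proj x ∈ K ∧ ∀ y ∈ K, ‖proj x - x‖ ≤ ‖y - x‖)
    (u y : E) (hy : y ∈ K) : ‖proj u - y‖^2 ≤ ‖u - y‖^2 := by
  obtain ⟨hvK, hvmin⟩ := hproj u
  haveI : Nonempty K := ⟨⟨proj u, hvK⟩⟩
  have hinf : ‖u - proj u‖ = ⨅ q : K, ‖u - q‖ := by
    apply le_antisymm
    · apply le_ciInf
      intro q
      rw [norm_sub_rev, show ‖u - (q:E)‖ = ‖(q:E) - u‖ from (norm_sub_rev _ _)]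
      exact hvmin q q.2
    · have hbdd : BddBelow (Set.range fun q : K => ‖u - (q:E)‖) := by
        refine ⟨0, ?_⟩
        rintro x ⟨q, rfl⟩
        exact norm_nonneg _
      exact ciInf_le hbdd ⟨proj u, hvK⟩
  have hchar := (norm_eq_iInf_iff_real_inner_le_zero hKconv hvK).1 hinf y hy
  have hexp : ‖u - y‖^2 = ‖u - proj u‖^2 + 2*⟪u - proj u, proj u - y⟫ + ‖proj u - y‖^2 := by
    rw [← sub_add_sub_cancel u (proj u) y, norm_add_sq_real]
  have hneg : ⟪u - proj u, proj u - y⟫ = -⟪u - proj u, y - proj u⟫ := by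
    rw [← inner_neg_right, neg_sub]
  nlinarith [sq_nonneg ‖u - proj u‖]

lemma sumB (f : ℕ → ℝ) (hf : ∀ t, 0 ≤ f t) (T : ℕ) :
    ∑ t ∈ Finset.range T, f t / Real.sqrt (∑ k ∈ Finset.range (t+1), f k)
      ≤ 2 * Real.sqrt (∑ k ∈ Finset.range T, f k) := by
  induction T with
  | zero => simp
  | succ T ih =>
    rw [Finset.sum_range_succ, Finset.sum_range_succ f]
    set A := ∑ k ∈ Finset.range T, f k with hA
    have hA0 : 0 ≤ A := Finset.sum_nonneg fun i _ => hf i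
    have hx : 0 ≤ f T := hf T
    have key : f T / Real.sqrt (A + f T) ≤ 2*(Real.sqrt (A + f T) - Real.sqrt A) := by
      rcases eq_or_lt_of_le (by linarith : (0:ℝ) ≤ A + f T) with h0 | h0
      · have hfT : f T = 0 := by linarith [Real.sqrt_nonneg (A + f T)]
        have : A = 0 := by linarith
        simp [hfT, this]
      · have hs : 0 < Real.sqrt (A + f T) := Real.sqrt_pos.2 h0
        rw [div_le_iff₀ hs]
        have h1 := Real.sq_sqrt (le_of_lt h0)
        have h2 := Real.sq_sqrt hA0
        nlinarith [sq_nonneg (Real.sqrt A - Real.sqrt (A + f T)), Real.sqrt_nonneg A]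
    linarith

lemma sumA (F a : ℕ → ℝ) (hFmono : ∀ t, F t ≤ F (t+1))
    (B : ℝ) (ha0 : ∀ t, 0 ≤ a t) (haB : ∀ t, a t ≤ B) (T : ℕ) :
    ∑ t ∈ Finset.range T, Real.sqrt (F (t+1)) * (a t - a (t+1))
      ≤ Real.sqrt (F T) * (B - a T) := by
  induction T with
  | zero =>
    simpa using mul_nonneg (Real.sqrt_nonneg (F 0)) (by linarith [ha0 0, haB 0])
  | succ T ih =>
    rw [Finset.sum_range_succ]
    have hmono : Real.sqrt (F T) ≤ Real.sqrt (F (T+1)) := Real.sqrt_le_sqrt (hFmono T)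
    nlinarith [ha0 T, haB T, ha0 (T+1), haB (T+1), Real.sqrt_nonneg (F T),
      Real.sqrt_nonneg (F (T+1))]

/-- AdaGrad-Norm regret bound over a closed convex set of diameter `D`, with
Euclidean projection `proj` and learning rate `η_t = (D/√2)/√(Σ_{k ≤ t} ‖g_k‖²)`. -/
theorem adagrad_norm_regret {d : ℕ} (K : Set (EuclideanSpace ℝ (Fin d)))
    (hKc : IsClosed K) (hKconv : Convex ℝ K)
    (D : ℝ) (hD : ∀ x ∈ K, ∀ y ∈ K, ‖x - y‖ ≤ D)
    (proj : EuclideanSpace ℝ (Fin d) → EuclideanSpace ℝ (Fin d))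
    (hproj : ∀ x, proj x ∈ K ∧ ∀ y ∈ K, ‖proj x - x‖ ≤ ‖y - x‖)
    (T : ℕ) (g : ℕ → EuclideanSpace ℝ (Fin d)) (η : ℕ → ℝ)
    (hη : ∀ t, η t = (D / Real.sqrt 2) / Real.sqrt (∑ k ∈ Finset.range (t+1), ‖g k‖^2))
    (w : ℕ → EuclideanSpace ℝ (Fin d)) (hw0 : w 0 ∈ K)
    (hwrec : ∀ t, w (t+1) = proj (w t - η t • g t))
    (wstar : EuclideanSpace ℝ (Fin d)) (hws : wstar ∈ K) :
    ∑ t ∈ Finset.range T, ⟪g t, w t - wstar⟫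
      ≤ D * Real.sqrt (2 * ∑ t ∈ Finset.range T, ‖g t‖^2) := by
  have hwK : ∀ t, w t ∈ K := by
    intro t
    induction t with
    | zero => exact hw0
    | succ t ih => rw [hwrec]; exact (hproj _).1
  have hD0 : 0 ≤ D := by
    have := hD (w 0) hw0 (w 0) hw0
    simpa using this
  rcases eq_or_lt_of_le hD0 with hDeq | hDpos
  · -- D = 0 : all points of K coincide
    have hwt : ∀ t, w t - wstar = 0 := by
      intro t
      have h1 := hD (w t) (hwK t) wstar hws
      have h2 : ‖w t - wstar‖ ≤ 0 := by linarith [hDeq]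
      simpa [norm_le_zero_iff] using h2
    have : ∑ t ∈ Finset.range T, ⟪g t, w t - wstar⟫ = 0 := by
      apply Finset.sum_eq_zero
      intro t _
      rw [hwt t, inner_zero_right]
    rw [this, ← hDeq]
    simp
  -- main case D > 0
  set F : ℕ → ℝ := fun n => ∑ k ∈ Finset.range n, ‖g k‖^2 with hF
  have hF0 : ∀ n, 0 ≤ F n := fun n => Finset.sum_nonneg fun i _ => sq_nonneg _
  have hFmono : ∀ n, F n ≤ F (n+1) := by
    intro n
    simp only [hF, Finset.sum_range_succ]
    nlinarith [sq_nonneg ‖g n‖]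
  set c : ℝ := D / Real.sqrt 2 with hc
  have hs2 : (0:ℝ) < Real.sqrt 2 := Real.sqrt_pos.2 (by norm_num)
  have hcpos : 0 < c := div_pos hDpos hs2
  have hηc : ∀ t, η t = c / Real.sqrt (F (t+1)) := fun t => hη t
  set a : ℕ → ℝ := fun t => ‖w t - wstar‖^2 with ha
  have ha0 : ∀ t, 0 ≤ a t := fun t => sq_nonneg _
  have haB : ∀ t, a t ≤ D^2 := by
    intro t
    have h1 := hD (w t) (hwK t) wstar hws
    have h2 := norm_nonneg (w t - wstar)
    simp only [ha]
    nlinarith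
  have hprojsq : ∀ u y, y ∈ K → ‖proj u - y‖^2 ≤ ‖u - y‖^2 :=
    fun u y hy => proj_contract hKconv proj hproj u y hy
  -- per-step descent
  have star : ∀ t, a (t+1) ≤ a t - 2*(η t)*⟪g t, w t - wstar⟫ + (η t)^2*‖g t‖^2 := by
    intro t
    have h1 := hprojsq (w t - η t • g t) wstar hws
    have hrw : w t - η t • g t - wstar = (w t - wstar) - η t • g t := by
      abel
    rw [hrw] at h1
    have hexp : ‖(w t - wstar) - η t • g t‖^2
        = ‖w t - wstar‖^2 - 2*(η t * ⟪g t, w t - wstar⟫) + (η t)^2*‖g t‖^2 := by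
      rw [norm_sub_sq_real, real_inner_smul_right, real_inner_comm, norm_smul, mul_pow]
      simp [sq_abs]
    calc a (t+1) = ‖proj (w t - η t • g t) - wstar‖^2 := by simp only [ha]; rw [hwrec t]
      _ ≤ ‖(w t - wstar) - η t • g t‖^2 := h1
      _ = a t - 2*(η t)*⟪g t, w t - wstar⟫ + (η t)^2*‖g t‖^2 := by rw [hexp]; simp only [ha]; ring
  -- per-step regret bound
  have P : ∀ t, ⟪g t, w t - wstar⟫
      ≤ Real.sqrt (F (t+1)) / (2*c) * (a t - a (t+1))
        + c/2 * (‖g t‖^2 / Real.sqrt (F (t+1))) := by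
    intro t
    rcases eq_or_lt_of_le (hF0 (t+1)) with h0 | h0
    · -- F (t+1) = 0 : g t = 0 and the step is trivial
      have hg : ‖g t‖^2 = 0 := by
        have := (Finset.sum_eq_zero_iff_of_nonneg (fun i _ => sq_nonneg ‖g i‖)).1 h0.symm
        exact this t (Finset.self_mem_range_succ t)
      have hgt : g t = (0:EuclideanSpace ℝ (Fin d)) := by
        have : ‖g t‖ = 0 := by nlinarith [norm_nonneg (g t)]
        exact norm_eq_zero.1 this
      have hproject : w (t+1) = w t := by
        rw [hwrec t, hgt, smul_zero, sub_zero]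
        have h2 := (hproj (w t)).2 (w t) (hwK t)
        simp only [sub_self, norm_zero] at h2
        have : ‖proj (w t) - w t‖ = 0 := le_antisymm h2 (norm_nonneg _)
        have := norm_eq_zero.1 this
        exact sub_eq_zero.1 this
      have haeq : a (t+1) = a t := by simp only [ha, hproject]
      rw [hgt, haeq]
      simp
    · have hs : 0 < Real.sqrt (F (t+1)) := Real.sqrt_pos.2 h0
      set s := Real.sqrt (F (t+1)) with hsdef
      have hstar := star t
      rw [hηc t] at hstar
      have h2 : 2*(c/s)*⟪g t, w t - wstar⟫ ≤ a t - a (t+1) + (c/s)^2*‖g t‖^2 := by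
        linarith
      have hmul := mul_le_mul_of_nonneg_left h2
        (le_of_lt (by positivity : (0:ℝ) < s/(2*c)))
      calc ⟪g t, w t - wstar⟫ = s/(2*c) * (2*(c/s)*⟪g t, w t - wstar⟫) := by
            field_simp
          _ ≤ s/(2*c) * (a t - a (t+1) + (c/s)^2*‖g t‖^2) := hmul
          _ = s/(2*c) * (a t - a (t+1)) + c/2 * (‖g t‖^2 / s) := by
            field_simp
  -- sum up
  have hsum : ∑ t ∈ Finset.range T, ⟪g t, w t - wstar⟫
      ≤ 1/(2*c) * ∑ t ∈ Finset.range T, Real.sqrt (F (t+1)) * (a t - a (t+1))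
        + c/2 * ∑ t ∈ Finset.range T, ‖g t‖^2 / Real.sqrt (F (t+1)) := by
    rw [Finset.mul_sum, Finset.mul_sum, ← Finset.sum_add_distrib]
    apply Finset.sum_le_sum
    intro t _
    calc ⟪g t, w t - wstar⟫
        ≤ Real.sqrt (F (t+1)) / (2*c) * (a t - a (t+1))
          + c/2 * (‖g t‖^2 / Real.sqrt (F (t+1))) := P t
      _ = 1/(2*c) * (Real.sqrt (F (t+1)) * (a t - a (t+1)))
          + c/2 * (‖g t‖^2 / Real.sqrt (F (t+1))) := by ring
  have hA := sumA F a hFmono (D^2) ha0 haB T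
  have hB := sumB (fun k => ‖g k‖^2) (fun k => sq_nonneg _) T
  have hsqF : 0 ≤ Real.sqrt (F T) := Real.sqrt_nonneg _
  have hfinal : 1/(2*c) * (Real.sqrt (F T) * (D^2 - a T)) + c/2 * (2*Real.sqrt (F T))
      ≤ D * Real.sqrt (2 * F T) := by
    have hrw2 : Real.sqrt (2 * F T) = Real.sqrt 2 * Real.sqrt (F T) :=
      Real.sqrt_mul (by norm_num) _
    rw [hrw2]
    have h22 : Real.sqrt 2 * Real.sqrt 2 = 2 := Real.mul_self_sqrt (by norm_num)
    have hkey : 1/(2*c) * (Real.sqrt (F T) * D^2) + c/2 * (2*Real.sqrt (F T))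
        = D * (Real.sqrt 2 * Real.sqrt (F T)) := by
      rw [hc]
      field_simp
      linear_combination (-Real.sqrt (F T)) * h22
    have hdrop : 1/(2*c) * (Real.sqrt (F T) * (D^2 - a T))
        ≤ 1/(2*c) * (Real.sqrt (F T) * D^2) := by
      apply mul_le_mul_of_nonneg_left _ (by positivity)
      apply mul_le_mul_of_nonneg_left _ hsqF
      linarith [ha0 T]
    linarith
  calc ∑ t ∈ Finset.range T, ⟪g t, w t - wstar⟫
      ≤ 1/(2*c) * ∑ t ∈ Finset.range T, Real.sqrt (F (t+1)) * (a t - a (t+1))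
        + c/2 * ∑ t ∈ Finset.range T, ‖g t‖^2 / Real.sqrt (F (t+1)) := hsum
    _ ≤ 1/(2*c) * (Real.sqrt (F T) * (D^2 - a T)) + c/2 * (2*Real.sqrt (F T)) := by
        have h1 := mul_le_mul_of_nonneg_left hA (by positivity : (0:ℝ) ≤ 1/(2*c))
        have h2 := mul_le_mul_of_nonneg_left hB (by positivity : (0:ℝ) ≤ c/2)
        linarith
    _ ≤ D * Real.sqrt (2 * F T) := hfinal
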